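/- Let A, B, C, D be linear endomorphisms of V, each self-adjoint or skew-adjoint, forming a chain complex (BA = 0, CB = 0, DC = 0), with rank(B) ≥ 4 and rank(C) ≥ 4. If R_A + ε_1 R_B + ε_2 R_C + ε_3 R_D = 0 with ε_i ∈ {−1,1} (canonical builds), then ε_2 = −1, ε_1 = −ε_3, B³ = ±BDB, and C³ = ±CAC. -/

import Mathlib

set_option linter.unusedSectionVars false

open RealInnerProductSpace

variable {V : Type*} [NormedAddCommGroup V] [InnerProductSpace ℝ V] [FiniteDimensional ℝ V]

noncomputable def RS (A : V →ₗ[ℝ] V) (x y z w : V) : ℝ :=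
  ⟪A x, w⟫ * ⟪A y, z⟫ - ⟪A x, z⟫ * ⟪A y, w⟫

noncomputable def RL (A : V →ₗ[ℝ] V) (x y z w : V) : ℝ :=
  RS A x y z w - 2 * ⟪A x, y⟫ * ⟪A z, w⟫


def IsACT (R : V → V → V → V → ℝ) : Prop :=
  (∀ x y z w, R x y z w = -R y x z w) ∧
  (∀ x y z w, R x y z w = R z w x y) ∧
  (∀ x y z w, R x y z w + R z x y w + R y z x w = 0)

open Classical in
noncomputable def Rcanon (A : V →ₗ[ℝ] V) : V → V → V → V → ℝ :=
  if LinearMap.adjoint A = A then RS A else RL A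

namespace Step15
open LinearMap Module Submodule

lemma symm_inner {X : V →ₗ[ℝ] V} (hX : adjoint X = X) (x y : V) : ⟪X x, y⟫ = ⟪X y, x⟫ := by
  have h := LinearMap.adjoint_inner_left X y x
  rw [hX] at h
  rw [h, real_inner_comm]

lemma skew_inner {X : V →ₗ[ℝ] V} (hX : adjoint X = -X) (x y : V) : ⟪X x, y⟫ = -⟪X y, x⟫ := by
  have h := LinearMap.adjoint_inner_left X y x
  rw [hX] at h
  simp only [LinearMap.neg_apply, inner_neg_left] at h
  have h2 := real_inner_comm x (X y)
  linarith

lemma skew_diag {X : V →ₗ[ℝ] V} (hX : adjoint X = -X) (x : V) : ⟪X x, x⟫ = 0 := by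
  have := skew_inner hX x x; linarith

lemma sym_eq_zero {X : V →ₗ[ℝ] V} (hX : adjoint X = X) (h : ∀ x, ⟪X x, x⟫ = 0) : X = 0 := by
  have hsym := symm_inner hX
  apply LinearMap.ext; intro x
  apply ext_inner_right ℝ; intro y
  have h1 := h (x + y)
  rw [map_add, inner_add_left, inner_add_right, inner_add_right] at h1
  have h2 := h x; have h3 := h y; have h4 := hsym x y
  rw [LinearMap.zero_apply, inner_zero_left]
  linarith

lemma exists_smul_of_ker (p q : V) (h : ∀ z : V, ⟪p, z⟫ = 0 → ⟪q, z⟫ = 0) :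
    ∃ c : ℝ, q = c • p := by
  by_cases hp : p = 0
  · refine ⟨0, ?_⟩
    have : ⟪q, q⟫ = 0 := h q (by simp [hp])
    simp [inner_self_eq_zero.mp this]
  · have hpp : ⟪p, p⟫ ≠ 0 := fun h0 => hp (inner_self_eq_zero.mp h0)
    refine ⟨⟪q, p⟫ / ⟪p, p⟫, ?_⟩
    apply ext_inner_right ℝ; intro z
    have hpz : ⟪p, z - (⟪p, z⟫ / ⟪p, p⟫) • p⟫ = 0 := by
      rw [inner_sub_right, real_inner_smul_right]
      field_simp
      ring
    have hq := h _ hpz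
    rw [inner_sub_right, real_inner_smul_right] at hq
    rw [real_inner_smul_left]
    have hqp := real_inner_comm q p
    field_simp at hq ⊢
    linear_combination hq

lemma exists_inner_ne (p q : V) (hp : p ≠ 0) (hq : q ≠ 0) :
    ∃ y, ⟪p, y⟫ ≠ 0 ∧ ⟪q, y⟫ ≠ 0 := by
  have hpp : ⟪p, p⟫ ≠ 0 := fun h => hp (inner_self_eq_zero.mp h)
  have hqq : ⟪q, q⟫ ≠ 0 := fun h => hq (inner_self_eq_zero.mp h)
  by_cases h : ⟪q, p⟫ = 0
  · refine ⟨p + q, ?_, ?_⟩ <;> rw [inner_add_right]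
    · rw [show ⟪p, q⟫ = 0 from by rw [real_inner_comm]; exact h, add_zero]; exact hpp
    · rw [h, zero_add]; exact hqq
  · exact ⟨p, hpp, h⟩

lemma collinear_of_line (Y : V →ₗ[ℝ] V) (a : V) (ha : Y a ≠ 0)
    (h : ∀ y z w, ⟪Y a, w⟫ * ⟪Y y, z⟫ = ⟪Y a, z⟫ * ⟪Y y, w⟫) :
    ∀ y, ∃ c : ℝ, Y y = c • Y a := by
  intro y
  refine ⟨⟪Y y, Y a⟫ / ⟪Y a, Y a⟫, ?_⟩
  apply ext_inner_right ℝ; intro z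
  have hz := h y z (Y a)
  have hZ : ⟪Y a, Y a⟫ ≠ 0 := fun h0 => ha (inner_self_eq_zero.mp h0)
  rw [real_inner_smul_left]
  field_simp
  linear_combination hz

lemma rank_le_one (Y : V →ₗ[ℝ] V) (p : V) (h : ∀ y, ∃ c : ℝ, Y y = c • p) :
    Module.finrank ℝ (LinearMap.range Y) ≤ 1 := by
  have hle : LinearMap.range Y ≤ Submodule.span ℝ {p} := by
    rintro _ ⟨y, rfl⟩
    obtain ⟨c, hc⟩ := h y
    rw [hc]; exact Submodule.smul_mem _ _ (Submodule.mem_span_singleton_self p)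
  refine le_trans (Submodule.finrank_mono hle) ?_
  classical
  refine le_trans (finrank_span_le_card _) ?_
  simp

lemma rank_le_two (Y : V →ₗ[ℝ] V) (p q : V) (h : ∀ y, ∃ c d : ℝ, Y y = c • p + d • q) :
    Module.finrank ℝ (LinearMap.range Y) ≤ 2 := by
  have hle : LinearMap.range Y ≤ Submodule.span ℝ {p, q} := by
    rintro _ ⟨y, rfl⟩
    obtain ⟨c, d, hc⟩ := h y
    rw [hc]
    refine Submodule.add_mem _ (Submodule.smul_mem _ _ ?_) (Submodule.smul_mem _ _ ?_) <;>
      exact Submodule.subset_span (by simp)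
  refine le_trans (Submodule.finrank_mono hle) ?_
  classical
  refine le_trans (finrank_span_le_card _) ?_
  rw [Set.toFinset_insert, Set.toFinset_singleton]
  exact (Finset.card_insert_le _ _).trans (by simp)

lemma eq_combo {k c d : ℝ} (hk : k ≠ 0) {u p q : V}
    (h : ∀ z, k * ⟪u, z⟫ = c * ⟪p, z⟫ + d * ⟪q, z⟫) : ∃ c' d' : ℝ, u = c' • p + d' • q := by
  refine ⟨c / k, d / k, ?_⟩
  apply ext_inner_right ℝ; intro z
  rw [inner_add_left, real_inner_smul_left, real_inner_smul_left]
  have hz := h z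
  field_simp
  linear_combination hz

lemma RS_eq_zero_of_collinear (Y : V →ₗ[ℝ] V) (p : V) (h : ∀ y, ∃ c : ℝ, Y y = c • p) :
    ∀ x y z w, RS Y x y z w = 0 := by
  intro x y z w
  obtain ⟨cx, hx⟩ := h x; obtain ⟨cy, hy⟩ := h y
  simp only [RS, hx, hy, real_inner_smul_left]; ring

lemma exists_RS_ne_zero (X : V →ₗ[ℝ] V) (h2 : 2 ≤ Module.finrank ℝ (LinearMap.range X)) :
    ∃ x y z w, RS X x y z w ≠ 0 := by
  by_contra hcon
  push_neg at hcon
  have hX0 : X ≠ 0 := by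
    intro h0
    rw [h0, LinearMap.range_zero, finrank_bot] at h2
    omega
  obtain ⟨a, ha⟩ : ∃ a, X a ≠ 0 := by
    by_contra hall; push_neg at hall
    exact hX0 (LinearMap.ext fun v => by simp [hall v])
  have hcol := collinear_of_line X a ha (fun y z w => by
    have := hcon a y z w; simp only [RS] at this; linarith)
  have := rank_le_one X (X a) hcol
  omega


lemma lemSS (X Y : V →ₗ[ℝ] V) (hX : adjoint X = X) (hY : adjoint Y = Y)
    (s : ℝ) (hs : s = 1 ∨ s = -1)
    (heq : ∀ x y z w, RS X x y z w = s * RS Y x y z w)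
    (hrk : 3 ≤ Module.finrank ℝ (LinearMap.range X)) :
    s = 1 ∧ (Y = X ∨ Y = -X) := by
  have hs0 : s ≠ 0 := by rcases hs with rfl | rfl <;> norm_num
  have fsym := symm_inner hX
  have gsym := symm_inner hY
  have hRSne : ∃ x y z w, RS X x y z w ≠ 0 := exists_RS_ne_zero X (by omega)
  have stepA : ∀ x, X x = 0 → Y x = 0 := by
    intro x0 h0
    by_contra hY0
    have hline : ∀ y z w, ⟪Y x0, w⟫ * ⟪Y y, z⟫ = ⟪Y x0, z⟫ * ⟪Y y, w⟫ := by
      intro y z w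
      have h := heq x0 y z w
      simp only [RS, h0, inner_zero_left, zero_mul, sub_zero, zero_sub, mul_zero] at h
      have h2 : ⟪Y x0, w⟫ * ⟪Y y, z⟫ - ⟪Y x0, z⟫ * ⟪Y y, w⟫ = 0 := by
        rcases hs with rfl | rfl <;> linarith
      linarith
    have hcol := collinear_of_line Y x0 hY0 hline
    obtain ⟨x, y, z, w, hne⟩ := hRSne
    apply hne
    have hRSY := RS_eq_zero_of_collinear Y (Y x0) hcol x y z w
    rw [heq x y z w, hRSY, mul_zero]
  have stepB : ∀ x, Y x = 0 → X x = 0 := by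
    intro x0 h0
    by_contra hX0
    have hline : ∀ y z w, ⟪X x0, w⟫ * ⟪X y, z⟫ = ⟪X x0, z⟫ * ⟪X y, w⟫ := by
      intro y z w
      have h := heq x0 y z w
      simp only [RS, h0, inner_zero_left, zero_mul, sub_zero, zero_sub, mul_zero, sub_self] at h
      linarith
    have := rank_le_one X (X x0) (collinear_of_line X x0 hX0 hline)
    omega
  have hker : LinearMap.ker X = LinearMap.ker Y := by
    ext v; simp only [LinearMap.mem_ker]; exact ⟨stepA v, stepB v⟩
  have hrkY : 3 ≤ Module.finrank ℝ (LinearMap.range Y) := by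
    have hh1 := LinearMap.finrank_range_add_finrank_ker X
    have hh2 := LinearMap.finrank_range_add_finrank_ker Y
    rw [hker] at hh1
    omega
  have stepC : ∀ x, ∃ c : ℝ, Y x = c • X x := by
    intro x
    by_cases hk : ∀ z, ⟪X x, z⟫ = 0 → ⟪Y x, z⟫ = 0
    · exact exists_smul_of_ker _ _ hk
    · exfalso
      push_neg at hk
      obtain ⟨a, ha1, ha2⟩ := hk
      have hsa : s * ⟪Y x, a⟫ ≠ 0 := mul_ne_zero hs0 ha2
      have key : ∀ y, ∃ c d : ℝ, Y y = c • Y x + d • X x := by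
        intro y
        have key0 : ∀ z, (s * ⟪Y x, a⟫) * ⟪Y y, z⟫
            = (s * ⟪Y y, a⟫) * ⟪Y x, z⟫ + (-⟪X y, a⟫) * ⟪X x, z⟫ := by
          intro z
          have h := heq x y z a
          simp only [RS] at h
          linear_combination (-1 : ℝ) * h + ⟪X y, z⟫ * ha1
        exact eq_combo hsa key0
      have := rank_le_two Y (Y x) (X x) key
      omega
  have hXne : X ≠ 0 := by
    intro h0
    rw [h0, LinearMap.range_zero, finrank_bot] at hrk
    omega
  obtain ⟨a0, ha0⟩ : ∃ a, X a ≠ 0 := by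
    by_contra hall; push_neg at hall
    exact hXne (LinearMap.ext fun v => by simp [hall v])
  obtain ⟨c0, hc0⟩ := stepC a0
  have hconst : ∀ x, Y x = c0 • X x := by
    intro x
    obtain ⟨c, hc⟩ := stepC x
    by_cases hx : X x = 0
    · rw [hc, hx, smul_zero, smul_zero]
    · obtain ⟨y, hy1, hy2⟩ := exists_inner_ne (X x) (X a0) hx ha0
      obtain ⟨cy, hcy⟩ := stepC y
      have e1 : c * ⟪X x, y⟫ = cy * ⟪X x, y⟫ := by
        have l1 : ⟪Y x, y⟫ = c * ⟪X x, y⟫ := by rw [hc, real_inner_smul_left]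
        have l2 : ⟪Y y, x⟫ = cy * ⟪X y, x⟫ := by rw [hcy, real_inner_smul_left]
        have l3 := gsym x y
        have l4 := fsym y x
        rw [l4] at l2
        linarith
      have e2 : c0 * ⟪X a0, y⟫ = cy * ⟪X a0, y⟫ := by
        have l1 : ⟪Y a0, y⟫ = c0 * ⟪X a0, y⟫ := by rw [hc0, real_inner_smul_left]
        have l2 : ⟪Y y, a0⟫ = cy * ⟪X y, a0⟫ := by rw [hcy, real_inner_smul_left]
        have l3 := gsym a0 y
        have l4 := fsym y a0
        rw [l4] at l2
        linarith
      have ec : c = cy := mul_right_cancel₀ hy1 e1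
      have ec0 : c0 = cy := mul_right_cancel₀ hy2 e2
      rw [hc, ec, ← ec0]
  have hYX : Y = c0 • X := LinearMap.ext fun x => by rw [hconst x]; simp
  obtain ⟨x, y, z, w, hne⟩ := hRSne
  have hval := heq x y z w
  rw [hYX] at hval
  have hscale : RS (c0 • X) x y z w = (c0 * c0) * RS X x y z w := by
    simp only [RS, LinearMap.smul_apply, real_inner_smul_left]; ring
  rw [hscale] at hval
  have hfac : (s * (c0 * c0) - 1) * RS X x y z w = 0 := by linear_combination -hval
  have hone : s * (c0 * c0) = 1 := by
    rcases mul_eq_zero.mp hfac with h | h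
    · linarith
    · exact absurd h hne
  have hs1 : s = 1 := by
    rcases hs with rfl | rfl
    · rfl
    · nlinarith [sq_nonneg c0]
  subst hs1
  refine ⟨rfl, ?_⟩
  have hc2 : c0 * c0 = 1 := by linarith
  rcases mul_self_eq_one_iff.mp hc2 with h | h
  · left; rw [hYX, h, one_smul]
  · right; rw [hYX, h, neg_smul, one_smul]

lemma lemSL (X Y : V →ₗ[ℝ] V) (hX : adjoint X = X) (hY : adjoint Y = -Y)
    (s : ℝ) (hs : s = 1 ∨ s = -1)
    (heq : ∀ x y z w, RS X x y z w = s * RL Y x y z w)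
    (hrk : 3 ≤ Module.finrank ℝ (LinearMap.range X)) : False := by
  have fsym := symm_inner hX
  have gsk := skew_inner hY
  have gd := skew_diag hY
  have hP : ∀ x y z, ⟪X x, x⟫ * ⟪X y, z⟫
      = ⟪X x, y⟫ * ⟪X x, z⟫ + (3 * s * ⟪Y x, y⟫) * ⟪Y x, z⟫ := by
    intro x y z
    have h := heq x y z x
    simp only [RS, RL] at h
    rw [gd x, gsk y x, gsk z x, fsym y x] at h
    linear_combination h
  by_cases h0 : ∀ x, ⟪X x, x⟫ = 0
  · have hX0 : X = 0 := sym_eq_zero hX h0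
    rw [hX0, LinearMap.range_zero, finrank_bot] at hrk
    omega
  · push_neg at h0
    obtain ⟨x0, hx0⟩ := h0
    have key : ∀ y, ∃ c d : ℝ, X y = c • X x0 + d • Y x0 := by
      intro y
      have hkey : ∀ z, ⟪X x0, x0⟫ * ⟪X y, z⟫
          = ⟪X x0, y⟫ * ⟪X x0, z⟫ + (3 * s * ⟪Y x0, y⟫) * ⟪Y x0, z⟫ := fun z => hP x0 y z
      exact eq_combo hx0 hkey
    have := rank_le_two X (X x0) (Y x0) key
    omega

lemma lemLS (X Y : V →ₗ[ℝ] V) (hX : adjoint X = -X) (hY : adjoint Y = Y)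
    (s : ℝ) (hs : s = 1 ∨ s = -1)
    (heq : ∀ x y z w, RL X x y z w = s * RS Y x y z w)
    (hrk : 3 ≤ Module.finrank ℝ (LinearMap.range X)) : False := by
  have hs0 : s ≠ 0 := by rcases hs with rfl | rfl <;> norm_num
  have fsk := skew_inner hX
  have fd := skew_diag hX
  have gsym := symm_inner hY
  have qslice : ∀ x y, -3 * (⟪X x, y⟫ * ⟪X x, y⟫)
      = s * (⟪Y x, y⟫ * ⟪Y x, y⟫ - ⟪Y x, x⟫ * ⟪Y y, y⟫) := by
    intro x y
    have h := heq x y x y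
    simp only [RS, RL] at h
    rw [fd x, fsk y x, gsym y x] at h
    linear_combination h
  by_cases h0 : ∀ x, ⟪Y x, x⟫ = 0
  · have hY0 : Y = 0 := sym_eq_zero hY h0
    have hX0 : X = 0 := by
      apply LinearMap.ext; intro x
      apply ext_inner_right ℝ; intro y
      have hq := qslice x y
      rw [hY0] at hq
      simp only [LinearMap.zero_apply, inner_zero_left, mul_zero, zero_mul, sub_zero,
        sub_self] at hq
      have : ⟪X x, y⟫ = 0 := by nlinarith
      simpa using this
    rw [hX0, LinearMap.range_zero, finrank_bot] at hrk
    omega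
  · push_neg at h0
    obtain ⟨x0, hx0⟩ := h0
    have hsx : s * ⟪Y x0, x0⟫ ≠ 0 := mul_ne_zero hs0 hx0
    have hrkY : Module.finrank ℝ (LinearMap.range Y) ≤ 2 := by
      apply rank_le_two Y (Y x0) (X x0)
      intro y
      have hkey : ∀ z, (s * ⟪Y x0, x0⟫) * ⟪Y y, z⟫
          = (s * ⟪Y x0, y⟫) * ⟪Y x0, z⟫ + (3 * ⟪X x0, y⟫) * ⟪X x0, z⟫ := by
        intro z
        have h := heq x0 y z x0
        simp only [RS, RL] at h
        rw [fd x0, fsk y x0, fsk z x0, gsym y x0] at h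
        linear_combination -h
      exact eq_combo hsx hkey
    have hkk : ∀ y0, Y y0 = 0 → X y0 = 0 := by
      intro y0 hy0
      apply ext_inner_right ℝ; intro z
      have hq := qslice z y0
      rw [gsym z y0, hy0] at hq
      simp only [inner_zero_left, mul_zero, zero_mul, sub_zero, sub_self] at hq
      have h1 : ⟪X z, y0⟫ = 0 := by nlinarith
      have h2 := fsk y0 z
      rw [inner_zero_left]
      linarith
    have hle : LinearMap.ker Y ≤ LinearMap.ker X := fun v hv => by
      simp only [LinearMap.mem_ker] at *
      exact hkk v hv
    have hh1 := LinearMap.finrank_range_add_finrank_ker X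
    have hh2 := LinearMap.finrank_range_add_finrank_ker Y
    have hh3 := Submodule.finrank_mono hle
    omega

lemma lemLL (X Y : V →ₗ[ℝ] V) (hX : adjoint X = -X) (hY : adjoint Y = -Y)
    (s : ℝ) (hs : s = 1 ∨ s = -1)
    (heq : ∀ x y z w, RL X x y z w = s * RL Y x y z w)
    (hrk : 1 ≤ Module.finrank ℝ (LinearMap.range X)) :
    s = 1 ∧ (Y = X ∨ Y = -X) := by
  have fsk := skew_inner hX
  have fd := skew_diag hX
  have gsk := skew_inner hY
  have gd := skew_diag hY
  have q : ∀ x y, ⟪X x, y⟫ * ⟪X x, y⟫ = s * (⟪Y x, y⟫ * ⟪Y x, y⟫) := by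
    intro x y
    have h := heq x y x y
    simp only [RS, RL] at h
    rw [fd x, fsk y x, gd x, gsk y x] at h
    linear_combination (-1/3 : ℝ) * h
  have hXne : X ≠ 0 := by
    intro h0
    rw [h0, LinearMap.range_zero, finrank_bot] at hrk
    omega
  obtain ⟨x1, hx1⟩ : ∃ x, X x ≠ 0 := by
    by_contra hall; push_neg at hall
    exact hXne (LinearMap.ext fun v => by simp [hall v])
  have hy1 : ⟪X x1, X x1⟫ ≠ 0 := fun h => hx1 (inner_self_eq_zero.mp h)
  have hs1 : s = 1 := by
    rcases hs with rfl | rfl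
    · rfl
    · exfalso
      have h := q x1 (X x1)
      have hpos : 0 < ⟪X x1, X x1⟫ := lt_of_le_of_ne real_inner_self_nonneg (Ne.symm hy1)
      nlinarith [mul_self_nonneg ⟪Y x1, X x1⟫, hpos]
  subst hs1
  refine ⟨rfl, ?_⟩
  have hprod : ∀ x y, ⟪(X - Y) x, y⟫ * ⟪(X + Y) x, y⟫ = 0 := by
    intro x y
    have h := q x y
    simp only [LinearMap.sub_apply, LinearMap.add_apply, inner_sub_left, inner_add_left]
    linear_combination h
  have dich : ∀ x, (X - Y) x = 0 ∨ (X + Y) x = 0 := by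
    intro x
    by_contra hc
    push_neg at hc
    obtain ⟨hPne, hQne⟩ := hc
    have hPP : ⟪(X - Y) x, (X - Y) x⟫ ≠ 0 := fun h => hPne (inner_self_eq_zero.mp h)
    have hQQ : ⟪(X + Y) x, (X + Y) x⟫ ≠ 0 := fun h => hQne (inner_self_eq_zero.mp h)
    have h1 := hprod x ((X - Y) x)
    have hQP : ⟪(X + Y) x, (X - Y) x⟫ = 0 := by
      rcases mul_eq_zero.mp h1 with h | h
      · exact absurd h hPP
      · exact h
    have h2 := hprod x ((X - Y) x + (X + Y) x)
    rw [inner_add_right, inner_add_right] at h2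
    have hPQ : ⟪(X - Y) x, (X + Y) x⟫ = 0 := by rw [real_inner_comm]; exact hQP
    rw [hPQ, hQP, add_zero, zero_add] at h2
    exact (mul_ne_zero hPP hQQ) h2
  by_cases hD : X - Y = 0
  · left
    have := sub_eq_zero.mp hD
    exact this.symm
  · right
    obtain ⟨a, haa⟩ : ∃ a, (X - Y) a ≠ 0 := by
      by_contra hall; push_neg at hall
      exact hD (LinearMap.ext fun v => by simp [hall v])
    have hQ0 : X + Y = 0 := by
      apply LinearMap.ext; intro b
      rw [LinearMap.zero_apply]
      by_contra hb
      have da := dich a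
      have db := dich b
      have dab := dich (a + b)
      rcases da with da | da
      · exact haa da
      rcases db with db | db
      swap
      · exact hb db
      rcases dab with h | h
      · rw [map_add, db, add_zero] at h
        exact haa h
      · rw [map_add, da, zero_add] at h
        exact hb h
    have : Y = -X := by
      have := eq_neg_of_add_eq_zero_right hQ0
      exact this
    exact this
lemma Rcanon_eq_RS {X : V →ₗ[ℝ] V} (h : adjoint X = X) : Rcanon X = RS X := by
  unfold Rcanon
  rw [if_pos h]

lemma RS_eq_RL_zero : RS (0 : V →ₗ[ℝ] V) = RL 0 := by
  funext x y z w
  simp [RS, RL]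

lemma Rcanon_eq_RL {X : V →ₗ[ℝ] V} (h : adjoint X = -X) : Rcanon X = RL X := by
  unfold Rcanon
  by_cases h' : adjoint X = X
  · rw [if_pos h']
    have hX0 : X = 0 := by
      have h3 : X = -X := h'.symm.trans h
      apply LinearMap.ext; intro v
      have h4 : X v = -(X v) := by
        have := LinearMap.ext_iff.mp h3 v
        simpa using this
      have h5 : X v + X v = 0 := eq_neg_iff_add_eq_zero.mp h4
      have h6 : (2 : ℝ) • X v = 0 := by rw [two_smul]; exact h5
      have := smul_eq_zero.mp h6
      rcases this with h | h
      · norm_num at h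
      · simpa using h
    rw [hX0]
    exact RS_eq_RL_zero
  · rw [if_neg h']

lemma Rcanon_neg (Z : V →ₗ[ℝ] V) : Rcanon (-Z) = Rcanon Z := by
  by_cases h : adjoint Z = Z
  · have h2 : adjoint (-Z) = -Z := by rw [map_neg, h]
    rw [Rcanon_eq_RS h, Rcanon_eq_RS h2]
    funext x y z w
    simp only [RS, LinearMap.neg_apply, inner_neg_left]
    ring
  · have h2 : ¬ adjoint (-Z) = -Z := by
      intro hc
      rw [map_neg, neg_inj] at hc
      exact h hc
    unfold Rcanon
    rw [if_neg h, if_neg h2]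
    funext x y z w
    simp only [RL, RS, LinearMap.neg_apply, inner_neg_left]
    ring

lemma RS_precomp (X T : V →ₗ[ℝ] V) (x y z w : V) :
    RS X (T x) (T y) (T z) (T w) = RS (adjoint T ∘ₗ X ∘ₗ T) x y z w := by
  simp only [RS, LinearMap.comp_apply, LinearMap.adjoint_inner_left]

lemma RL_precomp (X T : V →ₗ[ℝ] V) (x y z w : V) :
    RL X (T x) (T y) (T z) (T w) = RL (adjoint T ∘ₗ X ∘ₗ T) x y z w := by
  simp only [RL, RS, LinearMap.comp_apply, LinearMap.adjoint_inner_left]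

lemma adjoint_conj_sym {X : V →ₗ[ℝ] V} (T : V →ₗ[ℝ] V) (h : adjoint X = X) :
    adjoint (adjoint T ∘ₗ X ∘ₗ T) = adjoint T ∘ₗ X ∘ₗ T := by
  rw [LinearMap.adjoint_comp, LinearMap.adjoint_comp, LinearMap.adjoint_adjoint, h,
    LinearMap.comp_assoc]

lemma adjoint_conj_skew {X : V →ₗ[ℝ] V} (T : V →ₗ[ℝ] V) (h : adjoint X = -X) :
    adjoint (adjoint T ∘ₗ X ∘ₗ T) = -(adjoint T ∘ₗ X ∘ₗ T) := by
  rw [LinearMap.adjoint_comp, LinearMap.adjoint_comp, LinearMap.adjoint_adjoint, h,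
    LinearMap.comp_neg, LinearMap.neg_comp, LinearMap.comp_assoc]

lemma Rcanon_precomp {X : V →ₗ[ℝ] V} (hX : adjoint X = X ∨ adjoint X = -X)
    (T : V →ₗ[ℝ] V) (x y z w : V) :
    Rcanon X (T x) (T y) (T z) (T w) = Rcanon (adjoint T ∘ₗ X ∘ₗ T) x y z w := by
  rcases hX with h | h
  · rw [Rcanon_eq_RS h, Rcanon_eq_RS (adjoint_conj_sym T h), RS_precomp]
  · rw [Rcanon_eq_RL h, Rcanon_eq_RL (adjoint_conj_skew T h), RL_precomp]

lemma Rcanon_vanish {X T : V →ₗ[ℝ] V} (h : X ∘ₗ T = 0) (x y z w : V) :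
    Rcanon X (T x) (T y) (T z) (T w) = 0 := by
  have hv : ∀ v, X (T v) = 0 := fun v => by
    have := LinearMap.ext_iff.mp h v
    simpa using this
  unfold Rcanon
  split_ifs <;> simp [RS, RL, hv]

lemma flip_comp_zero {P Q : V →ₗ[ℝ] V}
    (hP : adjoint P = P ∨ adjoint P = -P) (hQ : adjoint Q = Q ∨ adjoint Q = -Q)
    (h : Q ∘ₗ P = 0) : P ∘ₗ Q = 0 := by
  have h2 := congrArg (LinearMap.adjoint (E := V) (F := V)) h
  rw [LinearMap.adjoint_comp, map_zero] at h2
  rcases hP with hp | hp <;> rcases hQ with hq | hq <;> rw [hp, hq] at h2 <;>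
    simpa [LinearMap.neg_comp, LinearMap.comp_neg, neg_eq_zero] using h2

lemma rank_cube {B : V →ₗ[ℝ] V} (hB : adjoint B = B ∨ adjoint B = -B) :
    Module.finrank ℝ (LinearMap.range (B ∘ₗ B ∘ₗ B)) = Module.finrank ℝ (LinearMap.range B) := by
  have k2 : ∀ u : V, B (B u) = 0 → B u = 0 := by
    intro u h
    have hinn := LinearMap.adjoint_inner_left B u (B u)
    -- hinn : ⟪adjoint B (B u), u⟫ = ⟪B u, B u⟫
    rcases hB with hb | hb <;> rw [hb] at hinn
    · rw [h] at hinn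
      simp only [inner_zero_left] at hinn
      exact inner_self_eq_zero.mp hinn.symm
    · simp only [LinearMap.neg_apply] at hinn
      rw [h] at hinn
      simp only [neg_zero, inner_zero_left] at hinn
      exact inner_self_eq_zero.mp hinn.symm
  have hker : LinearMap.ker (B ∘ₗ B ∘ₗ B) = LinearMap.ker B := by
    ext v
    simp only [LinearMap.mem_ker, LinearMap.comp_apply]
    constructor
    · intro h
      exact k2 v (k2 (B v) h)
    · intro h
      rw [h]; simp
  have h1 := LinearMap.finrank_range_add_finrank_ker (B ∘ₗ B ∘ₗ B)
  have h2 := LinearMap.finrank_range_add_finrank_ker B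
  rw [hker] at h1
  omega

lemma master {X Y : V →ₗ[ℝ] V} (hX : adjoint X = X ∨ adjoint X = -X)
    (hY : adjoint Y = Y ∨ adjoint Y = -Y) {s : ℝ} (hs : s = 1 ∨ s = -1)
    (heq : ∀ x y z w, Rcanon X x y z w = s * Rcanon Y x y z w)
    (hrk : 3 ≤ Module.finrank ℝ (LinearMap.range X)) :
    s = 1 ∧ (Y = X ∨ Y = -X) := by
  rcases hX with hx | hx <;> rcases hY with hy | hy
  · refine lemSS X Y hx hy s hs ?_ hrk
    simpa only [Rcanon_eq_RS hx, Rcanon_eq_RS hy] using heq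
  · exact (lemSL X Y hx hy s hs
      (by simpa only [Rcanon_eq_RS hx, Rcanon_eq_RL hy] using heq) hrk).elim
  · exact (lemLS X Y hx hy s hs
      (by simpa only [Rcanon_eq_RL hx, Rcanon_eq_RS hy] using heq) hrk).elim
  · refine lemLL X Y hx hy s hs ?_ (by omega)
    simpa only [Rcanon_eq_RL hx, Rcanon_eq_RL hy] using heq
end Step15

open LinearMap in
theorem stmt_15 (A B C D : V →ₗ[ℝ] V)
    (hA : LinearMap.adjoint A = A ∨ LinearMap.adjoint A = -A)
    (hB : LinearMap.adjoint B = B ∨ LinearMap.adjoint B = -B)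
    (hC : LinearMap.adjoint C = C ∨ LinearMap.adjoint C = -C)
    (hD : LinearMap.adjoint D = D ∨ LinearMap.adjoint D = -D)
    (hBA : B ∘ₗ A = 0) (hCB : C ∘ₗ B = 0) (hDC : D ∘ₗ C = 0)
    (hrankB : 4 ≤ Module.finrank ℝ (LinearMap.range B))
    (hrankC : 4 ≤ Module.finrank ℝ (LinearMap.range C))
    (ε₁ ε₂ ε₃ : ℝ) (h1 : ε₁ = 1 ∨ ε₁ = -1) (h2 : ε₂ = 1 ∨ ε₂ = -1) (h3 : ε₃ = 1 ∨ ε₃ = -1)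
    (hsum : ∀ x y z w : V,
      Rcanon A x y z w + ε₁ * Rcanon B x y z w + ε₂ * Rcanon C x y z w
        + ε₃ * Rcanon D x y z w = 0) :
    ε₂ = -1 ∧ ε₁ = -ε₃ ∧
    (B ^ 3 = B ∘ₗ D ∘ₗ B ∨ B ^ 3 = -(B ∘ₗ D ∘ₗ B)) ∧
    (C ^ 3 = C ∘ₗ A ∘ₗ C ∨ C ^ 3 = -(C ∘ₗ A ∘ₗ C)) := by
  classical
  have hAB : A ∘ₗ B = 0 := Step15.flip_comp_zero hA hB hBA
  have hBC : B ∘ₗ C = 0 := Step15.flip_comp_zero hB hC hCB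
  -- B equation
  have hadjXB : adjoint (B ∘ₗ B ∘ₗ B) = B ∘ₗ B ∘ₗ B ∨
      adjoint (B ∘ₗ B ∘ₗ B) = -(B ∘ₗ B ∘ₗ B) := by
    rcases hB with h | h
    · left
      rw [LinearMap.adjoint_comp, LinearMap.adjoint_comp, h, LinearMap.comp_assoc]
    · right
      rw [LinearMap.adjoint_comp, LinearMap.adjoint_comp, h]
      simp [LinearMap.neg_comp, LinearMap.comp_neg, LinearMap.comp_assoc]
  have hadjE : adjoint (adjoint B ∘ₗ D ∘ₗ B) = adjoint B ∘ₗ D ∘ₗ B ∨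
      adjoint (adjoint B ∘ₗ D ∘ₗ B) = -(adjoint B ∘ₗ D ∘ₗ B) := by
    rcases hD with h | h
    · exact Or.inl (Step15.adjoint_conj_sym B h)
    · exact Or.inr (Step15.adjoint_conj_skew B h)
  have heqB : ∀ x y z w, Rcanon (B ∘ₗ B ∘ₗ B) x y z w
      = (-(ε₁ * ε₃)) * Rcanon (adjoint B ∘ₗ D ∘ₗ B) x y z w := by
    intro x y z w
    have h := hsum (B x) (B y) (B z) (B w)
    rw [Step15.Rcanon_vanish hAB, Step15.Rcanon_vanish hCB, Step15.Rcanon_precomp hB B,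
      Step15.Rcanon_precomp hD B] at h
    have hconv : Rcanon (adjoint B ∘ₗ B ∘ₗ B) x y z w
        = Rcanon (B ∘ₗ B ∘ₗ B) x y z w := by
      rcases hB with hb | hb
      · rw [hb]
      · rw [hb, LinearMap.neg_comp, Step15.Rcanon_neg]
    rw [hconv] at h
    rcases h1 with rfl | rfl <;> rcases h3 with rfl | rfl <;> norm_num at h ⊢ <;> linarith
  obtain ⟨hsB, hEB⟩ := Step15.master hadjXB hadjE
    (show -(ε₁ * ε₃) = 1 ∨ -(ε₁ * ε₃) = -1 by
      rcases h1 with rfl | rfl <;> rcases h3 with rfl | rfl <;> norm_num)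
    heqB (by rw [Step15.rank_cube hB]; omega)
  -- C equation
  have hadjXC : adjoint (C ∘ₗ C ∘ₗ C) = C ∘ₗ C ∘ₗ C ∨
      adjoint (C ∘ₗ C ∘ₗ C) = -(C ∘ₗ C ∘ₗ C) := by
    rcases hC with h | h
    · left
      rw [LinearMap.adjoint_comp, LinearMap.adjoint_comp, h, LinearMap.comp_assoc]
    · right
      rw [LinearMap.adjoint_comp, LinearMap.adjoint_comp, h]
      simp [LinearMap.neg_comp, LinearMap.comp_neg, LinearMap.comp_assoc]
  have hadjF : adjoint (adjoint C ∘ₗ A ∘ₗ C) = adjoint C ∘ₗ A ∘ₗ C ∨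
      adjoint (adjoint C ∘ₗ A ∘ₗ C) = -(adjoint C ∘ₗ A ∘ₗ C) := by
    rcases hA with h | h
    · exact Or.inl (Step15.adjoint_conj_sym C h)
    · exact Or.inr (Step15.adjoint_conj_skew C h)
  have heqC : ∀ x y z w, Rcanon (C ∘ₗ C ∘ₗ C) x y z w
      = (-ε₂) * Rcanon (adjoint C ∘ₗ A ∘ₗ C) x y z w := by
    intro x y z w
    have h := hsum (C x) (C y) (C z) (C w)
    rw [Step15.Rcanon_vanish hBC, Step15.Rcanon_vanish hDC, Step15.Rcanon_precomp hA C,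
      Step15.Rcanon_precomp hC C] at h
    have hconv : Rcanon (adjoint C ∘ₗ C ∘ₗ C) x y z w
        = Rcanon (C ∘ₗ C ∘ₗ C) x y z w := by
      rcases hC with hc | hc
      · rw [hc]
      · rw [hc, LinearMap.neg_comp, Step15.Rcanon_neg]
    rw [hconv] at h
    rcases h2 with rfl | rfl <;> norm_num at h ⊢ <;> linarith
  obtain ⟨hsC, hFC⟩ := Step15.master hadjXC hadjF
    (show -ε₂ = 1 ∨ -ε₂ = -1 by rcases h2 with rfl | rfl <;> norm_num)
    heqC (by rw [Step15.rank_cube hC]; omega)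
  have hpB : B ^ 3 = B ∘ₗ B ∘ₗ B := by
    ext v
    simp [pow_succ, Module.End.mul_apply]
  have hpC : C ^ 3 = C ∘ₗ C ∘ₗ C := by
    ext v
    simp [pow_succ, Module.End.mul_apply]
  refine ⟨by linarith, ?_, ?_, ?_⟩
  · rcases h1 with rfl | rfl <;> rcases h3 with rfl | rfl <;> linarith
  · rcases hB with hb | hb
    · rw [hb] at hEB
      rcases hEB with h | h
      · left; rw [hpB, ← h]
      · right; rw [hpB, h, neg_neg]
    · rw [hb, LinearMap.neg_comp] at hEB
      rcases hEB with h | h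
      · right; rw [hpB, ← h]
      · left; exact hpB.trans (neg_inj.mp h).symm
  · rcases hC with hc | hc
    · rw [hc] at hFC
      rcases hFC with h | h
      · left; rw [hpC, ← h]
      · right; rw [hpC, h, neg_neg]
    · rw [hc, LinearMap.neg_comp] at hFC
      rcases hFC with h | h
      · right; rw [hpC, ← h]
      · left; exact hpC.trans (neg_inj.mp h).symm
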